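/- Let m ≥ 1 and k ≥ 2, and let δ ∈ {1,-1}^m. If Γ' ⊆ D_{km} is reversal-closed for the k-fold concatenation k(δ), then π(Γ') ⊆ D_m is reversal-closed for δ and π^{-1}(π(Γ')) is reversal-closed for k(δ) and contains Γ'. Consequently, every maximal reversal-closed subset Γ' for k(δ) satisfies Γ' = π^{-1}(π(Γ')). -/
import Mathlib


/-- The action of the dihedral group `D_m` on `{1,-1}^m` (tuples indexed by `ZMod m`,
with position `i ∈ {1,…,m}` identified with `(i : ZMod m)`), where the rotation
`r = r 1` acts by `r(δ₁,…,δₘ) = (δₘ, δ₁, …, δ_{m-1})` and the reflection `f = sr 0`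
acts by `f(δ₁,…,δₘ) = (-δₘ, …, -δ₂, -δ₁)`, i.e. `f(δ)ᵢ = -δ_{m+1-i}`. -/
def dact {m : ℕ} : DihedralGroup m → (ZMod m → ℤˣ) → (ZMod m → ℤˣ)
  | .r i, δ => fun j => δ (j - i)
  | .sr i, δ => fun j => -δ (1 - i - j)

/-- `Γ ⊆ D_m` is reversal-closed for `δ ∈ {1,-1}^m` if for all `σ₁, σ₂ ∈ Γ` there
exists `σ₃ ∈ Γ` with `δ · σ₁(δ) · σ₂(δ) = σ₃(δ)`. -/
def ReversalClosed {m : ℕ} (Γ : Set (DihedralGroup m)) (δ : ZMod m → ℤˣ) : Prop :=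
  ∀ σ₁ ∈ Γ, ∀ σ₂ ∈ Γ, ∃ σ₃ ∈ Γ, δ * dact σ₁ δ * dact σ₂ δ = dact σ₃ δ

/-- The group homomorphism `π : D_{km} → D_m` determined by `π(r) = r`, `π(f) = f`. -/
def dihedralProj {m k : ℕ} : DihedralGroup (k * m) → DihedralGroup m
  | .r i => .r (ZMod.castHom (dvd_mul_left m k) (ZMod m) i)
  | .sr i => .sr (ZMod.castHom (dvd_mul_left m k) (ZMod m) i)

/-- The group homomorphism `ι : D_m → D_{km}` determined by `ι(r) = r^k`, `ι(f) = f`. -/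
def dihedralIncl {m : ℕ} (k : ℕ) : DihedralGroup m → DihedralGroup (k * m)
  | .r i => .r ((k * i.val : ℕ) : ZMod (k * m))
  | .sr i => .sr ((k * i.val : ℕ) : ZMod (k * m))

/-- `k(δ) ∈ {1,-1}^{km}`: the concatenation of `k` copies of `δ ∈ {1,-1}^m`. -/
def concatTuple {m : ℕ} (k : ℕ) (δ : ZMod m → ℤˣ) : ZMod (k * m) → ℤˣ :=
  fun j => δ (ZMod.castHom (dvd_mul_left m k) (ZMod m) j)

/-- `δ(k) ∈ {1,-1}^{km}`: the tuple in which each entry of `δ ∈ {1,-1}^m` is repeated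
`k` times in place (position `p ∈ {1,…,km}` carries the value `δ_{⌈p/k⌉}`). -/
def repeatTuple {m : ℕ} (k : ℕ) (δ : ZMod m → ℤˣ) : ZMod (k * m) → ℤˣ :=
  fun j => δ ((((j - 1).val / k : ℕ) : ZMod m) + 1)

/-- The action of `σ` on the concatenation is the concatenation of the action of `π σ`. -/
lemma dact_concat {m k : ℕ} (σ : DihedralGroup (k * m)) (δ : ZMod m → ℤˣ) :
    dact σ (concatTuple k δ) = concatTuple k (dact (dihedralProj σ) δ) := by
  cases σ with
  | r i => funext j; simp [dact, dihedralProj, concatTuple, map_sub]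
  | sr i => funext j; simp [dact, dihedralProj, concatTuple, map_sub, map_one]

lemma concat_injective {m k : ℕ} (hm : 1 ≤ m) :
    Function.Injective (concatTuple (m := m) k) := by
  intro a b h
  funext x
  obtain ⟨y, hy⟩ := ZMod.ringHom_surjective (ZMod.castHom (dvd_mul_left m k) (ZMod m)) x
  have := congrFun h y
  simpa [concatTuple, hy] using this

lemma concat_mul {m k : ℕ} (a b : ZMod m → ℤˣ) :
    concatTuple k (a * b) = concatTuple k a * concatTuple k b := rfl

/-- If `Γ' ⊆ D_{km}` is reversal-closed for `k(δ)`, then `π(Γ')` is reversal-closed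
for `δ`, `π⁻¹(π(Γ'))` is reversal-closed for `k(δ)` and contains `Γ'`; consequently
every maximal reversal-closed subset `Γ'` for `k(δ)` satisfies `Γ' = π⁻¹(π(Γ'))`. -/
theorem maximal_reversal_closed_concat {m k : ℕ} (hm : 1 ≤ m) (hk : 2 ≤ k)
    (δ : ZMod m → ℤˣ) (Γ' : Set (DihedralGroup (k * m)))
    (hΓ' : ReversalClosed Γ' (concatTuple k δ)) :
    ReversalClosed (dihedralProj '' Γ') δ ∧
    ReversalClosed (dihedralProj ⁻¹' (dihedralProj '' Γ')) (concatTuple k δ) ∧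
    Γ' ⊆ dihedralProj ⁻¹' (dihedralProj '' Γ') ∧
    ((∀ Γ'' : Set (DihedralGroup (k * m)),
        ReversalClosed Γ'' (concatTuple k δ) → Γ' ⊆ Γ'' → Γ'' = Γ') →
      Γ' = dihedralProj ⁻¹' (dihedralProj '' Γ')) := by
  have h1 : ReversalClosed (dihedralProj '' Γ') δ := by
    rintro _ ⟨σ₁, hσ₁, rfl⟩ _ ⟨σ₂, hσ₂, rfl⟩
    obtain ⟨σ₃, hσ₃, heq⟩ := hΓ' σ₁ hσ₁ σ₂ hσ₂
    refine ⟨dihedralProj σ₃, ⟨σ₃, hσ₃, rfl⟩, concat_injective (k := k) hm ?_⟩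
    rw [concat_mul, concat_mul, ← dact_concat, ← dact_concat, ← dact_concat]
    exact heq
  have h2 : ReversalClosed (dihedralProj ⁻¹' (dihedralProj '' Γ')) (concatTuple k δ) := by
    rintro τ₁ ⟨σ₁, hσ₁, h₁⟩ τ₂ ⟨σ₂, hσ₂, h₂⟩
    obtain ⟨σ₃, hσ₃, heq⟩ := hΓ' σ₁ hσ₁ σ₂ hσ₂
    refine ⟨σ₃, ⟨σ₃, hσ₃, rfl⟩, ?_⟩
    rw [dact_concat τ₁, dact_concat τ₂, ← h₁, ← h₂, ← dact_concat, ← dact_concat]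
    exact heq
  have h3 : Γ' ⊆ dihedralProj ⁻¹' (dihedralProj '' Γ') := fun σ hσ => ⟨σ, hσ, rfl⟩
  exact ⟨h1, h2, h3, fun hmax => (hmax _ h2 h3).symm⟩
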